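/- If every continuous real-valued function on a metric space (X,d) is almost uniformly continuous (i.e., X is an AUC space), then (X,d) is cofinally complete. -/

import Mathlib

open Metric Filter Topology

/-- A sequence is cofinally Cauchy if for every ε>0 there is an infinite index set
on which all pairwise distances are < ε. -/
def CofinallyCauchy {X : Type*} [MetricSpace X] (x : ℕ → X) : Prop :=
  ∀ ε > 0, ∃ N : Set ℕ, N.Infinite ∧ ∀ n ∈ N, ∀ j ∈ N, dist (x n) (x j) < ε

/-- A function is almost bounded if for every ε>0 there is δ>0 such that the image of
every set of diameter < δ is contained in a finite union of open ε-balls. -/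
def AlmostBounded {X Y : Type*} [MetricSpace X] [MetricSpace Y] (f : X → Y) : Prop :=
  ∀ ε > 0, ∃ δ > 0, ∀ A : Set X, EMetric.diam A < ENNReal.ofReal δ →
    ∃ B : Finset Y, f '' A ⊆ ⋃ b ∈ B, Metric.ball b ε

/-- A metric space is cofinally complete if every cofinally Cauchy sequence clusters. -/
def CofinallyComplete (X : Type*) [MetricSpace X] : Prop :=
  ∀ x : ℕ → X, CofinallyCauchy x → ∃ p : X, MapClusterPt p atTop x

/-- The local total boundedness functional. -/
noncomputable def tFun {X : Type*} [MetricSpace X] (x : X) : ℝ :=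
  sSup {ε : ℝ | 0 < ε ∧ TotallyBounded (Metric.ball x ε)}

/-- If every continuous real-valued function on X is almost uniformly continuous,
then X is cofinally complete. -/
theorem aucSpace_cofinallyComplete {X : Type*} [MetricSpace X]
    (h : ∀ f : X → ℝ, Continuous f → AlmostBounded f) :
    CofinallyComplete X := by
  intro x hx
  by_contra hcl
  push_neg at hcl
  -- Step A: around every point only finitely many indices land in some small ball
  have hA : ∀ p : X, ∃ r > 0, {n : ℕ | x n ∈ ball p r}.Finite := by
    intro p
    have hp := hcl p
    rw [mapClusterPt_iff_frequently] at hp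
    push_neg at hp
    obtain ⟨s, hs, hfreq⟩ := hp
    obtain ⟨a, ha⟩ := eventually_atTop.mp hfreq
    obtain ⟨r, hr, hball⟩ := Metric.mem_nhds_iff.mp hs
    refine ⟨r, hr, Set.Finite.subset (Set.finite_Iio a) ?_⟩
    intro n hn
    by_contra hna
    simp only [Set.mem_Iio, not_lt] at hna
    exact ha n hna (hball hn)
  -- Step B: every point has a ball meeting the range only possibly at itself
  have hB : ∀ p : X, ∃ r > 0, ∀ n : ℕ, x n ∈ ball p r → x n = p := by
    intro p
    obtain ⟨r, hr, hfin⟩ := hA p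
    by_cases hD : ∃ n, x n ∈ ball p r ∧ x n ≠ p
    · classical
      set D : Finset ℕ := hfin.toFinset.filter (fun n => x n ≠ p) with hDdef
      have hDne : D.Nonempty := by
        obtain ⟨n, hn1, hn2⟩ := hD
        refine ⟨n, ?_⟩
        simp only [hDdef, Finset.mem_filter, hfin.mem_toFinset]
        exact ⟨hn1, hn2⟩
      set m := D.inf' hDne (fun n => dist (x n) p) with hmdef
      have hm : 0 < m := by
        rw [hmdef, Finset.lt_inf'_iff]
        intro n hn
        have : x n ≠ p := by simpa [hDdef] using (Finset.mem_filter.mp hn).2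
        exact dist_pos.mpr this
      refine ⟨min r m, lt_min hr hm, ?_⟩
      intro n hn
      by_contra hne
      have hnr : x n ∈ ball p r := by
        rw [mem_ball] at hn ⊢; exact lt_of_lt_of_le hn (min_le_left _ _)
      have hnD : n ∈ D := by
        rw [hDdef, Finset.mem_filter, hfin.mem_toFinset]
        exact ⟨hnr, hne⟩
      have h1 : m ≤ dist (x n) p := Finset.inf'_le _ hnD
      have h2 : dist (x n) p < m := by
        rw [mem_ball] at hn; exact lt_of_lt_of_le hn (min_le_right _ _)
      linarith
    · push_neg at hD
      exact ⟨r, hr, hD⟩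
  -- fibers are finite
  have hFib : ∀ p : X, {m : ℕ | x m = p}.Finite := by
    intro p
    obtain ⟨r, hr, hfin⟩ := hA p
    refine hfin.subset ?_
    intro m hm
    simp only [Set.mem_setOf_eq] at hm ⊢
    rw [hm]; exact mem_ball_self hr
  -- the function g
  classical
  set g : X → ℝ := fun q => ((sSup {m : ℕ | x m = q} : ℕ) : ℝ) with hgdef
  have hgn : ∀ n : ℕ, (n : ℝ) ≤ g (x n) := by
    intro n
    have : n ≤ sSup {m : ℕ | x m = x n} :=
      le_csSup (hFib (x n)).bddAbove (by simp)
    simp only [hgdef]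
    exact_mod_cast this
  -- range is closed
  have hScl : IsClosed (Set.range x) := by
    rw [← isOpen_compl_iff, Metric.isOpen_iff]
    intro p hp
    obtain ⟨r, hr, hrp⟩ := hB p
    refine ⟨r, hr, ?_⟩
    rintro q hq ⟨n, rfl⟩
    exact hp ⟨n, hrp n hq⟩
  -- g is continuous on the range
  have hgc : ContinuousOn g (Set.range x) := by
    intro p hp
    obtain ⟨r, hr, hrp⟩ := hB p
    have hmem : {p} ∈ 𝓝[Set.range x] p := by
      rw [mem_nhdsWithin]
      refine ⟨ball p r, isOpen_ball, mem_ball_self hr, ?_⟩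
      rintro q ⟨hq1, n, rfl⟩
      exact hrp n hq1
    have htp : Tendsto g (𝓝[Set.range x] p) (pure (g p)) := by
      rw [tendsto_pure]
      filter_upwards [hmem] with q hq
      rw [Set.mem_singleton_iff] at hq
      rw [hq]
    exact htp.mono_right (pure_le_nhds _)
  -- Tietze extension
  obtain ⟨f, hf⟩ := ContinuousMap.exists_restrict_eq (Y := ℝ) hScl
    ⟨_, hgc.restrict⟩
  have hfg : ∀ p (hp : p ∈ Set.range x), f p = g p := by
    intro p hp
    have := ContinuousMap.congr_fun hf ⟨p, hp⟩
    simpa using this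
  -- apply almost boundedness
  obtain ⟨δ, hδ, hδ'⟩ := h f f.continuous (1/2) (by norm_num)
  obtain ⟨N, hNinf, hNd⟩ := hx (δ/2) (by linarith)
  have hdiam : EMetric.diam (x '' N) < ENNReal.ofReal δ := by
    have h1 : EMetric.diam (x '' N) ≤ ENNReal.ofReal (δ/2) := by
      apply EMetric.diam_le
      rintro a ⟨n, hn, rfl⟩ b ⟨j, hj, rfl⟩
      rw [edist_dist]
      exact ENNReal.ofReal_le_ofReal (le_of_lt (hNd n hn j hj))
    exact lt_of_le_of_lt h1 ((ENNReal.ofReal_lt_ofReal_iff hδ).mpr (by linarith))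
  obtain ⟨B, hB2⟩ := hδ' (x '' N) hdiam
  -- the set of top fiber indices over N
  set C : Set ℕ := (fun n => sSup {m : ℕ | x m = x n}) '' N with hCdef
  have hCfin : C.Finite := by
    have hsub : C ⊆ ⋃ b ∈ (B : Set ℝ), {k : ℕ | |(k : ℝ) - b| < 1/2} := by
      rintro k ⟨n, hn, rfl⟩
      have hfx : f (x n) = ((sSup {m : ℕ | x m = x n} : ℕ) : ℝ) :=
        hfg (x n) ⟨n, rfl⟩
      have hmem : f (x n) ∈ ⋃ b ∈ B, Metric.ball b (1/2) :=
        hB2 ⟨x n, ⟨n, hn, rfl⟩, rfl⟩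
      simp only [Set.mem_iUnion, mem_ball] at hmem
      obtain ⟨b, hb, hlt⟩ := hmem
      simp only [Set.mem_iUnion]
      refine ⟨b, hb, ?_⟩
      simp only [Set.mem_setOf_eq]
      rw [← Real.dist_eq, ← hfx]
      exact hlt
    refine Set.Finite.subset (Set.Finite.biUnion B.finite_toSet fun b _ => ?_) hsub
    apply Set.Subsingleton.finite
    intro k hk k' hk'
    simp only [Set.mem_setOf_eq] at hk hk'
    have : |(k : ℝ) - (k' : ℝ)| < 1 := by
      calc |(k : ℝ) - (k' : ℝ)| ≤ |(k : ℝ) - b| + |b - (k' : ℝ)| := abs_sub_le _ _ _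
        _ < 1/2 + 1/2 := by rw [abs_sub_comm b]; linarith
        _ = 1 := by norm_num
    have h2 : |((k : ℤ) - (k' : ℤ) : ℤ)| < 1 := by
      have h3 : |(((k : ℤ) - (k' : ℤ) : ℤ) : ℝ)| < 1 := by push_cast; push_cast at this; exact this
      exact_mod_cast h3
    rw [abs_lt] at h2
    have h4 : (k : ℤ) = (k' : ℤ) := by omega
    exact_mod_cast h4
  -- final contradiction
  obtain ⟨M, hM⟩ := hCfin.bddAbove
  have hNM : ∃ n ∈ N, M < n := by
    by_contra hc
    push_neg at hc
    exact hNinf (Set.Finite.subset (Set.finite_Iic M) hc)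
  obtain ⟨n, hn, hMn⟩ := hNM
  have hc1 : sSup {m : ℕ | x m = x n} ∈ C := ⟨n, hn, rfl⟩
  have hc2 : sSup {m : ℕ | x m = x n} ≤ M := hM hc1
  have hc3 : n ≤ sSup {m : ℕ | x m = x n} :=
    le_csSup (hFib (x n)).bddAbove (by simp)
  omega
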